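/- Abstract lower-bound lemma: if a set S ⊆ ℝ^n is contained in a union of boxes ⋃_e [l_e, u] with common upper bound u, and x* is defined coordinatewise as x*_j = u_j when c_j < 0 and x*_j = l_{e*,j} when c_j ≥ 0 where e* minimizes ∑_j max(c_j,0)·l_{e,j}, then ∑ c_j x*_j ≤ ∑ c_j x_j for all x ∈ S. -/

import Mathlib

theorem abstract_lower_bound (n : ℕ) (E : Type*) [Fintype E] [Nonempty E]
    (u : Fin n → ℝ) (l : E → Fin n → ℝ) (hl : ∀ e j, l e j ≤ u j)
    (S : Set (Fin n → ℝ))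
    (hS : ∀ x ∈ S, ∃ e : E, ∀ j, l e j ≤ x j ∧ x j ≤ u j)
    (c : Fin n → ℝ) (estar : E)
    (hmin : ∀ e : E, ∑ j, max (c j) 0 * l estar j ≤ ∑ j, max (c j) 0 * l e j)
    (xstar : Fin n → ℝ)
    (hxstar : xstar = fun j => if c j < 0 then u j else l estar j) :
    ∀ x ∈ S, ∑ j, c j * xstar j ≤ ∑ j, c j * x j := by
  intro x hx
  obtain ⟨e, he⟩ := hS x hx
  calc ∑ j, c j * xstar j
      = ∑ j, (min (c j) 0 * u j + max (c j) 0 * l estar j) := by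
        refine Finset.sum_congr rfl fun j _ => ?_
        rw [hxstar]
        by_cases h : c j < 0
        · simp [h, min_eq_left h.le, max_eq_right h.le]
        · push_neg at h
          simp [not_lt.mpr h, min_eq_right h, max_eq_left h]
    _ = (∑ j, min (c j) 0 * u j) + ∑ j, max (c j) 0 * l estar j :=
        Finset.sum_add_distrib
    _ ≤ (∑ j, min (c j) 0 * u j) + ∑ j, max (c j) 0 * l e j := by
        exact add_le_add le_rfl (hmin e)
    _ = ∑ j, (min (c j) 0 * u j + max (c j) 0 * l e j) :=
        Finset.sum_add_distrib.symm
    _ ≤ ∑ j, c j * x j := by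
        refine Finset.sum_le_sum fun j _ => ?_
        have h1 : min (c j) 0 * u j ≤ min (c j) 0 * x j :=
          mul_le_mul_of_nonpos_left (he j).2 (min_le_right _ _)
        have h2 : max (c j) 0 * l e j ≤ max (c j) 0 * x j :=
          mul_le_mul_of_nonneg_left (he j).1 (le_max_right _ _)
        calc min (c j) 0 * u j + max (c j) 0 * l e j
            ≤ min (c j) 0 * x j + max (c j) 0 * x j := add_le_add h1 h2
          _ = c j * x j := by rw [← add_mul, min_add_max, add_zero]
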